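/- Let (q_n)_{n≥1} be an enumeration of ℚ ∩ [0,1]. For each n define f_n : [0,1] → [−1,1] by f_n(x) = sin(1/(x − q_n)) for x ≠ q_n and f_n(q_n) = 0, and let f(x) = Σ_{n=1}^∞ 2^{−n} f_n(x). Let X = [0,1] × [−1,1] and E = {(x, f(x)) : x ∈ [0,1]}. Then E is not a B₁-retract of X: there is no function r : X → E that is a pointwise limit of a sequence of continuous functions X → E and satisfies r(p) = p for all p ∈ E. -/

import Mathlib

/-- A function between topological spaces is *Baire-one* if it is a pointwise limit of a
sequence of continuous functions. -/
def IsBaireOne {X Y : Type*} [TopologicalSpace X] [TopologicalSpace Y] (f : X → Y) : Prop :=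
  ∃ g : ℕ → X → Y, (∀ n, Continuous (g n)) ∧
    ∀ x, Filter.Tendsto (fun n => g n x) Filter.atTop (nhds (f x))

/-- A subset `E` of a topological space `X` is a *B₁-retract* of `X` if there exists a
Baire-one function `r : X → E` such that `r x = x` for all `x ∈ E`. -/
def IsB1Retract {X : Type*} [TopologicalSpace X] (E : Set X) : Prop :=
  ∃ r : X → E, IsBaireOne r ∧ ∀ x (hx : x ∈ E), (r x : X) = x


open Filter Topology Set

open Filter Topology Set

section Aux

variable (q : ℕ → ℝ)

/-- The `n`-th term of the series. -/
noncomputable def trm (n : ℕ) (x : ℝ) : ℝ :=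
  (1 / 2 : ℝ) ^ (n + 1) * (if x = q n then 0 else Real.sin (1 / (x - q n)))

lemma trm_norm_le (n : ℕ) (x : ℝ) : ‖trm q n x‖ ≤ (1 / 2 : ℝ) ^ (n + 1) := by
  rw [trm, norm_mul]
  have h1 : ‖(1 / 2 : ℝ) ^ (n + 1)‖ = (1 / 2 : ℝ) ^ (n + 1) := by
    rw [Real.norm_eq_abs, abs_of_nonneg (by positivity)]
  rw [h1]
  have h2 : ‖if x = q n then (0:ℝ) else Real.sin (1 / (x - q n))‖ ≤ 1 := by
    split
    · simp
    · rw [Real.norm_eq_abs]; exact Real.abs_sin_le_one _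
  calc (1 / 2 : ℝ) ^ (n + 1) * ‖if x = q n then (0:ℝ) else Real.sin (1 / (x - q n))‖
      ≤ (1 / 2 : ℝ) ^ (n + 1) * 1 := by
        exact mul_le_mul_of_nonneg_left h2 (by positivity)
    _ = (1 / 2 : ℝ) ^ (n + 1) := mul_one _

lemma summable_geo : Summable (fun n : ℕ => (1 / 2 : ℝ) ^ (n + 1)) := by
  apply Summable.comp_injective (summable_geometric_of_lt_one (by norm_num) (by norm_num))
    (add_left_injective 1)

lemma summable_trm (x : ℝ) : Summable (fun n => trm q n x) :=
  Summable.of_norm_bounded (summable_geo) (fun n => trm_norm_le q n x)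

lemma tsum_geo : ∑' n : ℕ, (1 / 2 : ℝ) ^ (n + 1) = 1 := by
  have := tsum_geometric_of_lt_one (r := (1/2:ℝ)) (by norm_num) (by norm_num)
  calc ∑' n : ℕ, (1 / 2 : ℝ) ^ (n + 1) = ∑' n : ℕ, (1/2 : ℝ) * (1/2)^n := by
        congr 1; ext n; ring
    _ = (1/2 : ℝ) * ∑' n : ℕ, (1/2:ℝ)^n := tsum_mul_left
    _ = 1 := by rw [this]; norm_num

lemma abs_tsum_trm_le (x : ℝ) : |∑' n, trm q n x| ≤ 1 := by
  calc |∑' n, trm q n x| ≤ ∑' n : ℕ, (1/2:ℝ)^(n+1) := by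
        apply (norm_tsum_le_tsum_norm (Summable.of_nonneg_of_le (fun n => norm_nonneg _)
          (fun n => trm_norm_le q n x) summable_geo)).trans
        exact Summable.tsum_le_tsum (fun n => trm_norm_le q n x)
          (Summable.of_nonneg_of_le (fun n => norm_nonneg _)
            (fun n => trm_norm_le q n x) summable_geo) summable_geo
    _ = 1 := tsum_geo

end Aux

section Aux2

variable (q : ℕ → ℝ)

lemma contAt_of_unif {ι α β : Type*} [TopologicalSpace α] [UniformSpace β] {F : ι → α → β}
    {f : α → β} {p : Filter ι} [p.NeBot] {x : α} (h : TendstoUniformly F f p)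
    (hc : ∀ i, ContinuousAt (F i) x) : ContinuousAt f x := by
  apply continuousAt_of_locally_uniform_approx_of_continuousAt
  intro u hu
  rcases (h u hu).exists with ⟨i, hi⟩
  exact ⟨Set.univ, Filter.univ_mem, F i, hc i, fun y _ => hi y⟩

lemma trm_continuousAt {k : ℕ} {y : ℝ} (hy : y ≠ q k) : ContinuousAt (trm q k) y := by
  have hev : ∀ᶠ x in 𝓝 y, x ≠ q k := eventually_ne_nhds hy
  have hc : ContinuousAt (fun x => (1 / 2 : ℝ) ^ (k + 1) * Real.sin (1 / (x - q k))) y := by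
    apply ContinuousAt.mul continuousAt_const
    exact Real.continuous_sin.continuousAt.comp
      (ContinuousAt.div continuousAt_const (continuousAt_id.sub continuousAt_const)
        (sub_ne_zero.mpr hy))
  apply hc.congr
  filter_upwards [hev] with x hx
  simp [trm, hx]

lemma contAt_fsum {α ι : Type*} [TopologicalSpace α] (t : Finset ι) (F : ι → α → ℝ) {x : α}
    (h : ∀ k ∈ t, ContinuousAt (F k) x) : ContinuousAt (fun y => ∑ k ∈ t, F k y) x := by
  classical
  induction t using Finset.induction_on with
  | empty => simpa using continuousAt_const
  | insert a s hk ih =>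
    simp only [Finset.sum_insert hk]
    exact (h _ (Finset.mem_insert_self _ _)).add
      (ih fun k hkt => h k (Finset.mem_insert_of_mem hkt))

lemma continuousAt_G (hq_inj : Function.Injective q) (n : ℕ) :
    ContinuousAt (fun x => ∑' k, if k = n then 0 else trm q k x) (q n) := by
  have hb : ∀ (k : ℕ) (x : ℝ), ‖if k = n then (0:ℝ) else trm q k x‖ ≤ (1/2:ℝ)^(k+1) := by
    intro k x
    split
    · rw [norm_zero]; positivity
    · exact trm_norm_le q k x
  have hu := tendstoUniformly_tsum summable_geo hb
  apply contAt_of_unif hu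
  intro t
  apply contAt_fsum
  intro k _
  by_cases hk : k = n
  · simp only [if_pos hk]; exact continuousAt_const
  · simp only [if_neg hk]
    exact trm_continuousAt q (fun h => hk (hq_inj h.symm))

lemma f_split (f : ℝ → ℝ)
    (hf : ∀ x : ℝ, f x =
      ∑' n : ℕ, (1 / 2 : ℝ) ^ (n + 1) * (if x = q n then 0 else Real.sin (1 / (x - q n))))
    (n : ℕ) (x : ℝ) :
    f x = trm q n x + ∑' k, if k = n then 0 else trm q k x := by
  have h1 : f x = ∑' k, trm q k x := hf x
  rw [h1]
  exact Summable.tsum_eq_add_tsum_ite (summable_trm q x) n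

end Aux2

lemma exists_sin_one {d : ℝ} (hd : 0 < d) : ∃ e : ℝ, 0 < e ∧ e ≤ d ∧ Real.sin (1 / e) = 1 := by
  obtain ⟨m, hm⟩ := exists_nat_ge (1 / d)
  have hπ := Real.pi_gt_three
  set c : ℝ := Real.pi / 2 + m * (2 * Real.pi) with hc
  have hc_pos : 0 < c := by positivity
  refine ⟨c⁻¹, inv_pos.mpr hc_pos, ?_, ?_⟩
  · have hmn : (0:ℝ) ≤ (m : ℝ) := Nat.cast_nonneg m
    have h2pi : (1:ℝ) ≤ 2 * Real.pi := by linarith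
    have hmul : (m : ℝ) * 1 ≤ (m : ℝ) * (2 * Real.pi) := mul_le_mul_of_nonneg_left h2pi hmn
    have h1 : 1 / d ≤ c := hm.trans (by rw [hc]; nlinarith [Real.pi_pos])
    rw [inv_eq_one_div]
    exact (one_div_le hd hc_pos).mp h1
  · rw [one_div, inv_inv, hc, Real.sin_add_nat_mul_two_pi, Real.sin_pi_div_two]

lemma key (q : ℕ → ℝ) (hq_inj : Function.Injective q)
    (hq_range : Set.range q = {x : ℝ | x ∈ Set.Icc (0 : ℝ) 1 ∧ ∃ p : ℚ, (p : ℝ) = x})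
    (f : ℝ → ℝ)
    (hf : ∀ x : ℝ, f x =
      ∑' n : ℕ, (1 / 2 : ℝ) ^ (n + 1) * (if x = q n then 0 else Real.sin (1 / (x - q n))))
    (u : (Set.Icc (0 : ℝ) 1 ×ˢ Set.Icc (-1 : ℝ) 1 : Set (ℝ × ℝ)) → ℝ)
    (hu : Continuous u)
    (hur : ∀ x, u x ∈ Set.Icc (0 : ℝ) 1)
    (hv : Continuous fun x => f (u x))
    {a b : (Set.Icc (0 : ℝ) 1 ×ˢ Set.Icc (-1 : ℝ) 1 : Set (ℝ × ℝ))}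
    (hab : u a < u b) : False := by
  have hconv : Convex ℝ (Set.Icc (0 : ℝ) 1 ×ˢ Set.Icc (-1 : ℝ) 1 : Set (ℝ × ℝ)) :=
    (convex_Icc _ _).prod (convex_Icc _ _)
  have hne : (Set.Icc (0 : ℝ) 1 ×ˢ Set.Icc (-1 : ℝ) 1 : Set (ℝ × ℝ)).Nonempty :=
    ⟨(0, 0), by constructor <;> constructor <;> norm_num⟩
  haveI : ConnectedSpace (Set.Icc (0 : ℝ) 1 ×ˢ Set.Icc (-1 : ℝ) 1 : Set (ℝ × ℝ)) :=
    isConnected_iff_connectedSpace.mp ⟨hne, hconv.isPreconnected⟩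
  -- find a rational q n strictly between u a and u b
  obtain ⟨p, hp1, hp2⟩ := exists_rat_btwn hab
  have hpr : (p : ℝ) ∈ Set.range q := by
    rw [hq_range]
    exact ⟨⟨(hur a).1.trans hp1.le, hp2.le.trans (hur b).2⟩, p, rfl⟩
  obtain ⟨n, hn⟩ := hpr
  have hqa : u a < q n := hn ▸ hp1
  have hqb : q n < u b := hn ▸ hp2
  -- q n is in the range of u
  have hr : IsPreconnected (Set.range u) := isPreconnected_range hu
  have hqn_mem : q n ∈ Set.range u :=
    hr.ordConnected.out (Set.mem_range_self a) (Set.mem_range_self b) ⟨hqa.le, hqb.le⟩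
  set S := u ⁻¹' {q n} with hS
  have hS_closed : IsClosed S := isClosed_singleton.preimage hu
  have hS_ne : S.Nonempty := by
    obtain ⟨c, hc⟩ := hqn_mem
    exact ⟨c, hc⟩
  have hS_nuniv : S ≠ Set.univ := by
    intro h
    have : b ∈ S := h ▸ Set.mem_univ b
    exact absurd (this : u b = q n) (ne_of_gt hqb)
  -- pick a frontier point
  have hfr : (frontier S).Nonempty := by
    rw [Set.nonempty_iff_ne_empty]
    intro h
    rcases frontier_eq_empty_iff.mp h with h | h
    · exact hS_ne.ne_empty h
    · exact hS_nuniv h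
  obtain ⟨x₀, hx₀⟩ := hfr
  have hx₀S : x₀ ∈ S := hS_closed.frontier_subset hx₀
  have hux₀ : u x₀ = q n := hx₀S
  -- the n-th term composed with u is continuous at x₀
  have hG : ContinuousAt (fun y => ∑' k, if k = n then 0 else trm q k (u y)) x₀ := by
    have h1 := continuousAt_G q hq_inj n
    rw [← hux₀] at h1
    exact h1.comp hu.continuousAt
  have hT : ContinuousAt (fun y => trm q n (u y)) x₀ := by
    have h1 : ContinuousAt
        (fun y => f (u y) - ∑' k, if k = n then 0 else trm q k (u y)) x₀ :=
      hv.continuousAt.sub hG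
    have h2 : (fun y => f (u y) - ∑' k, if k = n then 0 else trm q k (u y)) =
        fun y => trm q n (u y) := by
      funext y
      rw [f_split q f hf n (u y)]
      ring
    rwa [h2] at h1
  rw [Metric.continuousAt_iff] at hT
  obtain ⟨δ, hδ, hball⟩ := hT ((1 / 2 : ℝ) ^ (n + 2)) (by positivity)
  have h0 : trm q n (u x₀) = 0 := by rw [hux₀]; simp [trm]
  -- the ball around x₀
  set B := (Subtype.val ⁻¹' Metric.ball (x₀ : ℝ × ℝ) δ :
    Set (Set.Icc (0 : ℝ) 1 ×ˢ Set.Icc (-1 : ℝ) 1 : Set (ℝ × ℝ))) with hB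
  have hB_open : IsOpen B := Metric.isOpen_ball.preimage continuous_subtype_val
  have hx₀B : x₀ ∈ B := Metric.mem_ball_self hδ
  have hB_conn : IsPreconnected B := by
    rw [← Topology.IsInducing.isPreconnected_image Topology.IsInducing.subtypeVal, hB,
      Subtype.image_preimage_coe]
    exact (hconv.inter (convex_ball _ _)).isPreconnected
  -- a point of B where u differs from q n
  have hnotsub : ¬ B ⊆ S := fun h => hx₀.2 (hB_open.subset_interior_iff.mpr h hx₀B)
  obtain ⟨y, hyB, hyS⟩ := Set.not_subset.mp hnotsub
  have hy : u y ≠ q n := hyS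
  have him : IsPreconnected (u '' B) := hB_conn.image u hu.continuousOn
  have hoc := him.ordConnected
  -- find z ∈ B with |trm q n (u z)| = (1/2)^(n+1)
  obtain ⟨z, hzB, htrm⟩ : ∃ z, z ∈ B ∧ |trm q n (u z)| = (1 / 2 : ℝ) ^ (n + 1) := by
    rcases lt_or_gt_of_ne hy with hlt | hgt
    · -- u y < q n
      obtain ⟨e, he_pos, he_le, he_sin⟩ := exists_sin_one (sub_pos.mpr hlt)
      have hmem : q n - e ∈ u '' B := by
        apply hoc.out ⟨y, hyB, rfl⟩ ⟨x₀, hx₀B, hux₀⟩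
        constructor <;> linarith
      obtain ⟨z, hzB, hzt⟩ := hmem
      refine ⟨z, hzB, ?_⟩
      have hzne : u z ≠ q n := by rw [hzt]; intro h; linarith
      rw [trm, if_neg hzne, hzt]
      have : (q n - e) - q n = -e := by ring
      rw [this]
      have hsin : Real.sin (1 / -e) = -1 := by
        rw [div_neg, one_div, ← inv_neg, inv_neg, ← one_div, Real.sin_neg, he_sin]
      rw [hsin]
      rw [abs_mul]
      rw [abs_of_nonneg (by positivity : (0:ℝ) ≤ (1/2:ℝ)^(n+1))]
      simp
    · -- q n < u y
      obtain ⟨e, he_pos, he_le, he_sin⟩ := exists_sin_one (sub_pos.mpr hgt)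
      have hmem : q n + e ∈ u '' B := by
        apply hoc.out ⟨x₀, hx₀B, hux₀⟩ ⟨y, hyB, rfl⟩
        constructor <;> linarith
      obtain ⟨z, hzB, hzt⟩ := hmem
      refine ⟨z, hzB, ?_⟩
      have hzne : u z ≠ q n := by rw [hzt]; intro h; linarith
      rw [trm, if_neg hzne, hzt]
      have : (q n + e) - q n = e := by ring
      rw [this, he_sin, mul_one]
      exact abs_of_nonneg (by positivity)
  -- contradiction with continuity
  have hdist : dist z x₀ < δ := by
    rw [Subtype.dist_eq]
    exact hzB
  have hcon := hball hdist
  rw [h0, Real.dist_eq, sub_zero, htrm] at hcon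
  have hle : (1 / 2 : ℝ) ^ (n + 2) ≤ (1 / 2 : ℝ) ^ (n + 1) :=
    pow_le_pow_of_le_one (by norm_num) (by norm_num) (by omega)
  linarith

theorem graph_of_sum_of_sin_not_b1_retract
    (q : ℕ → ℝ) (hq_inj : Function.Injective q)
    (hq_range : Set.range q = {x : ℝ | x ∈ Set.Icc (0 : ℝ) 1 ∧ ∃ p : ℚ, (p : ℝ) = x})
    (f : ℝ → ℝ)
    (hf : ∀ x : ℝ, f x =
      ∑' n : ℕ, (1 / 2 : ℝ) ^ (n + 1) * (if x = q n then 0 else Real.sin (1 / (x - q n)))) :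
    ¬ IsB1Retract {p : (Set.Icc (0 : ℝ) 1 ×ˢ Set.Icc (-1 : ℝ) 1 : Set (ℝ × ℝ)) |
        (p : ℝ × ℝ).2 = f (p : ℝ × ℝ).1} := by
  rintro ⟨r, ⟨g, hgc, hgt⟩, hret⟩
  -- f maps into [-1, 1]
  have hf1 : ∀ x, f x ∈ Set.Icc (-1 : ℝ) 1 := by
    intro x
    have h1 : |f x| ≤ 1 := by rw [hf x]; exact abs_tsum_trm_le q x
    exact ⟨(abs_le.mp h1).1, (abs_le.mp h1).2⟩
  -- the two distinguished points of the graph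
  set p0 : (Set.Icc (0 : ℝ) 1 ×ˢ Set.Icc (-1 : ℝ) 1 : Set (ℝ × ℝ)) :=
    ⟨((0 : ℝ), f 0), ⟨⟨le_refl 0, zero_le_one⟩, hf1 0⟩⟩ with hp0
  set p1 : (Set.Icc (0 : ℝ) 1 ×ˢ Set.Icc (-1 : ℝ) 1 : Set (ℝ × ℝ)) :=
    ⟨((1 : ℝ), f 1), ⟨⟨zero_le_one, le_refl 1⟩, hf1 1⟩⟩ with hp1
  have pE0 : p0 ∈ {p : (Set.Icc (0 : ℝ) 1 ×ˢ Set.Icc (-1 : ℝ) 1 : Set (ℝ × ℝ)) |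
      (p : ℝ × ℝ).2 = f (p : ℝ × ℝ).1} := rfl
  have pE1 : p1 ∈ {p : (Set.Icc (0 : ℝ) 1 ×ˢ Set.Icc (-1 : ℝ) 1 : Set (ℝ × ℝ)) |
      (p : ℝ × ℝ).2 = f (p : ℝ × ℝ).1} := rfl
  -- every continuous map into the graph is constant
  have hconst : ∀ k, g k p0 = g k p1 := by
    intro k
    set u : (Set.Icc (0 : ℝ) 1 ×ˢ Set.Icc (-1 : ℝ) 1 : Set (ℝ × ℝ)) → ℝ :=
      fun x => (((g k x).1 : ℝ × ℝ)).1 with hu_def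
    have huc : Continuous u :=
      continuous_fst.comp (continuous_subtype_val.comp (continuous_subtype_val.comp (hgc k)))
    have hmemE : ∀ x, (((g k x).1 : ℝ × ℝ)).2 = f (u x) := fun x => (g k x).2
    have hur : ∀ x, u x ∈ Set.Icc (0 : ℝ) 1 := fun x => (g k x).1.2.1
    have hvc : Continuous fun x => f (u x) := by
      have heq : (fun x => f (u x)) = fun x => (((g k x).1 : ℝ × ℝ)).2 :=
        funext fun x => (hmemE x).symm
      rw [heq]
      exact continuous_snd.comp (continuous_subtype_val.comp
        (continuous_subtype_val.comp (hgc k)))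
    have hueq : u p0 = u p1 := by
      by_contra h
      rcases lt_or_gt_of_ne h with h' | h'
      · exact key q hq_inj hq_range f hf u huc hur hvc h'
      · exact key q hq_inj hq_range f hf u huc hur hvc h'
    apply Subtype.ext
    apply Subtype.ext
    apply Prod.ext
    · exact hueq
    · rw [hmemE, hmemE, hueq]
  -- hence the Baire-one retraction is constant, contradiction
  have ht0 := hgt p0
  have ht1 := hgt p1
  have ht0' : Filter.Tendsto (fun k => g k p0) Filter.atTop (nhds (r p1)) := by
    have heq2 : (fun k => g k p0) = fun k => g k p1 := funext hconst
    rw [heq2]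
    exact ht1
  have hru := tendsto_nhds_unique ht0 ht0'
  have e0 : ((r p0 : (Set.Icc (0 : ℝ) 1 ×ˢ Set.Icc (-1 : ℝ) 1 : Set (ℝ × ℝ)))) = p0 :=
    hret p0 pE0
  have e1 : ((r p1 : (Set.Icc (0 : ℝ) 1 ×ˢ Set.Icc (-1 : ℝ) 1 : Set (ℝ × ℝ)))) = p1 :=
    hret p1 pE1
  have : p0 = p1 := by rw [← e0, ← e1, hru]
  have : ((0 : ℝ), f 0) = ((1 : ℝ), f 1) := congrArg Subtype.val this
  have h01 : (0 : ℝ) = 1 := congrArg Prod.fst this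
  norm_num at h01
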